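/- Any density operator ρ of rank r on a finite-dimensional Hilbert space satisfies ‖ρ − σ‖₁ ≥ 2(1 − r/r₀) for every density operator σ with flat spectrum of rank r₀ > r (i.e., σ = Π/r₀ for a projection Π of rank r₀). -/

import Mathlib

open Matrix
open scoped ComplexOrder

/-- The trace norm (sum of singular values) of a complex square matrix. -/
noncomputable def traceNorm {ι : Type*} [Fintype ι] [DecidableEq ι]
    (A : Matrix ι ι ℂ) : ℝ :=
  (((Matrix.posSemidef_conjTranspose_mul_self A).1.eigenvectorUnitary : Matrix ι ι ℂ) *
    diagonal (((↑) : ℝ → ℂ) ∘ (fun x => Real.sqrt x) ∘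
      (Matrix.posSemidef_conjTranspose_mul_self A).1.eigenvalues) *
    (star (Matrix.posSemidef_conjTranspose_mul_self A).1.eigenvectorUnitary : Matrix ι ι ℂ)).trace.re

section Helpers

set_option linter.unusedSectionVars false

variable {n : Type*} [Fintype n] [DecidableEq n]

open scoped MatrixOrder

lemma psd_diag_re_nonneg {M : Matrix n n ℂ} (hM : M.PosSemidef) (i : n) :
    0 ≤ (M i i).re := by
  have h := hM.dotProduct_mulVec_nonneg (Pi.single i 1)
  have : (star (Pi.single i 1) ⬝ᵥ M *ᵥ Pi.single i 1) = M i i := by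
    simp [dotProduct, mulVec, Pi.single_apply]
  rw [this] at h
  exact (Complex.le_def.mp h).1

lemma psd_trace_re_nonneg {M : Matrix n n ℂ} (hM : M.PosSemidef) :
    0 ≤ M.trace.re := by
  rw [Matrix.trace, Complex.re_sum]
  exact Finset.sum_nonneg fun i _ => psd_diag_re_nonneg hM i

lemma psd_mul_trace_re_nonneg {M N : Matrix n n ℂ} (hM : M.PosSemidef) (hN : N.PosSemidef) :
    0 ≤ ((M * N).trace).re := by
  have h1 : M * N = M * CFC.sqrt N * CFC.sqrt N := by
    rw [mul_assoc, CFC.sqrt_mul_sqrt_self N hN.nonneg]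
  have h2 : (M * CFC.sqrt N * CFC.sqrt N).trace = (CFC.sqrt N * M * CFC.sqrt N).trace := by
    rw [trace_mul_cycle]
  have h3 : (CFC.sqrt N * M * CFC.sqrt N).PosSemidef := by
    have := hM.mul_mul_conjTranspose_same (CFC.sqrt N)
    rwa [(CFC.sqrt_nonneg N).posSemidef.1.eq] at this
  rw [h1, h2]
  exact psd_trace_re_nonneg h3

lemma trace_diagonal_mul' (d : n → ℂ) (M : Matrix n n ℂ) :
    (diagonal d * M).trace = ∑ i, d i * M i i := by
  simp [Matrix.trace, Matrix.diag, Matrix.diagonal_mul]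

lemma trace_unitary_conj (U : Matrix.unitaryGroup n ℂ) (M : Matrix n n ℂ) :
    ((U : Matrix n n ℂ) * M * star (U : Matrix n n ℂ)).trace = M.trace := by
  rw [trace_mul_cycle, (Unitary.star_mul_self_of_mem U.2), one_mul]

lemma conj_diag_mul {A : Matrix n n ℂ} (hA : A.IsHermitian) (e f : n → ℂ) :
    ((hA.eigenvectorUnitary : Matrix n n ℂ) * diagonal e * star (hA.eigenvectorUnitary : Matrix n n ℂ)) *
      ((hA.eigenvectorUnitary : Matrix n n ℂ) * diagonal f * star (hA.eigenvectorUnitary : Matrix n n ℂ)) =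
    (hA.eigenvectorUnitary : Matrix n n ℂ) * diagonal (e * f) * star (hA.eigenvectorUnitary : Matrix n n ℂ) := by
  set U : Matrix n n ℂ := (hA.eigenvectorUnitary : Matrix n n ℂ) with hU
  have h1 : star U * U = 1 := Unitary.star_mul_self_of_mem hA.eigenvectorUnitary.2
  simp only [mul_assoc]
  rw [show star U * (U * (diagonal f * star U)) = diagonal f * star U from by
    rw [← mul_assoc, h1, one_mul]]
  rw [show diagonal e * (diagonal f * star U) = diagonal (e * f) * star U from by
    rw [← mul_assoc, diagonal_mul_diagonal]
    rfl]

lemma traceNorm_eq_sqrt (A : Matrix n n ℂ) :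
    traceNorm A = (CFC.sqrt (Aᴴ * A)).trace.re := by
  have hPA := Matrix.posSemidef_conjTranspose_mul_self A
  set U : Matrix n n ℂ := (hPA.1.eigenvectorUnitary : Matrix n n ℂ) with hU
  set d : n → ℂ := ((↑) : ℝ → ℂ) ∘ (fun x => Real.sqrt x) ∘ hPA.1.eigenvalues with hdd
  have hd : 0 ≤ d := by
    intro i
    rw [Complex.le_def]
    simp [hdd, Real.sqrt_nonneg]
  have hTpsd : (U * diagonal d * star U).PosSemidef := by
    simpa [star_eq_conjTranspose] using
      (Matrix.PosSemidef.diagonal (d := d) hd).mul_mul_conjTranspose_same U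
  have hT : CFC.sqrt (Aᴴ * A) = U * diagonal d * star U := by
    rw [CFC.sqrt_eq_iff _ _ hPA.nonneg hTpsd.nonneg]
    rw [hU, conj_diag_mul hPA.1]
    conv_rhs => rw [hPA.1.spectral_theorem, Unitary.conjStarAlgAut_apply]
    have hfun : d * d = (RCLike.ofReal ∘ hPA.1.eigenvalues : n → ℂ) := by
      funext i
      show ((Real.sqrt (hPA.1.eigenvalues i) : ℝ) : ℂ) * ((Real.sqrt (hPA.1.eigenvalues i) : ℝ) : ℂ)
          = ((hPA.1.eigenvalues i : ℝ) : ℂ)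
      rw [← Complex.ofReal_mul, Real.mul_self_sqrt (hPA.eigenvalues_nonneg i)]
    rw [hfun]
  rw [hT]
  rfl

lemma traceNorm_herm_eq {A : Matrix n n ℂ} (hA : A.IsHermitian) :
    traceNorm A = ∑ i, |hA.eigenvalues i| := by
  set U : Matrix n n ℂ := (hA.eigenvectorUnitary : Matrix n n ℂ) with hU
  set d : n → ℂ := fun i => ((|hA.eigenvalues i| : ℝ) : ℂ) with hdd
  have hd : 0 ≤ d := by
    intro i
    rw [Complex.le_def]
    simp [hdd, abs_nonneg]
  set S : Matrix n n ℂ := U * diagonal d * star U with hS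
  have hSpsd : S.PosSemidef := by
    simpa [hS, star_eq_conjTranspose] using
      (Matrix.PosSemidef.diagonal (d := d) hd).mul_mul_conjTranspose_same U
  have hS2 : S ^ 2 = Aᴴ * A := by
    rw [pow_two, hS, conj_diag_mul hA]
    rw [hA.eq]
    conv_rhs => rw [hA.spectral_theorem, Unitary.conjStarAlgAut_apply, conj_diag_mul hA]
    have hfun : d * d = (RCLike.ofReal ∘ hA.eigenvalues) * (RCLike.ofReal ∘ hA.eigenvalues) := by
      funext i
      show ((|hA.eigenvalues i| : ℝ) : ℂ) * ((|hA.eigenvalues i| : ℝ) : ℂ)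
          = ((hA.eigenvalues i : ℝ) : ℂ) * ((hA.eigenvalues i : ℝ) : ℂ)
      rw [← Complex.ofReal_mul, ← Complex.ofReal_mul, abs_mul_abs_self]
    rw [hfun]
  have hsqrt : S = CFC.sqrt (Aᴴ * A) :=
    ((CFC.sqrt_eq_iff _ _ (posSemidef_conjTranspose_mul_self A).nonneg hSpsd.nonneg).mpr
      (by rw [← pow_two]; exact hS2)).symm
  rw [traceNorm_eq_sqrt, ← hsqrt, hS, hU,
    trace_unitary_conj hA.eigenvectorUnitary (diagonal d), Matrix.trace_diagonal]
  simp [hdd, Complex.re_sum]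

lemma trace_herm_mul_re (A : Matrix n n ℂ) (hA : A.IsHermitian) (B : Matrix n n ℂ) :
    ((A * B).trace).re = ∑ i, hA.eigenvalues i *
      ((star (hA.eigenvectorUnitary : Matrix n n ℂ) * B * (hA.eigenvectorUnitary : Matrix n n ℂ)) i i).re := by
  have h : (A * B).trace = (diagonal (RCLike.ofReal ∘ hA.eigenvalues) *
      (star (hA.eigenvectorUnitary : Matrix n n ℂ) * B * (hA.eigenvectorUnitary : Matrix n n ℂ))).trace := by
    conv_lhs => rw [hA.spectral_theorem, Unitary.conjStarAlgAut_apply]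
    set U : Matrix n n ℂ := (hA.eigenvectorUnitary : Matrix n n ℂ) with hU
    set D : Matrix n n ℂ := diagonal (RCLike.ofReal ∘ hA.eigenvalues) with hD
    calc (U * D * star U * B).trace = ((U * D) * (star U * B)).trace := by
          rw [mul_assoc]
      _ = ((star U * B) * (U * D)).trace := trace_mul_comm _ _
      _ = ((star U * B * U) * D).trace := by simp only [mul_assoc]
      _ = (D * (star U * B * U)).trace := trace_mul_comm _ _
  rw [h, trace_diagonal_mul', Complex.re_sum]
  congr 1; ext i
  exact Complex.re_ofReal_mul _ _

lemma trace_herm_re (A : Matrix n n ℂ) (hA : A.IsHermitian) :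
    (A.trace).re = ∑ i, hA.eigenvalues i := by
  conv_lhs => rw [hA.spectral_theorem, Unitary.conjStarAlgAut_apply]
  rw [trace_unitary_conj hA.eigenvectorUnitary, Matrix.trace_diagonal, Complex.re_sum]
  simp

lemma herm_idem_posSemidef {P : Matrix n n ℂ} (h1 : Pᴴ = P) (h2 : P * P = P) :
    P.PosSemidef := by
  have := posSemidef_conjTranspose_mul_self P
  rwa [h1, h2] at this

lemma herm_idem_eigenvalues {P : Matrix n n ℂ} (hP : P.IsHermitian) (h2 : P * P = P) (i : n) :
    hP.eigenvalues i = 0 ∨ hP.eigenvalues i = 1 := by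
  set U : Matrix n n ℂ := (hP.eigenvectorUnitary : Matrix n n ℂ) with hU
  have hUU : U * star U = 1 := Unitary.mul_star_self_of_mem hP.eigenvectorUnitary.2
  have hd : star U * P * U = diagonal (RCLike.ofReal ∘ hP.eigenvalues) := by
    have := hP.conjStarAlgAut_star_eigenvectorUnitary
    rwa [Unitary.conjStarAlgAut_star_apply] at this
  have key : diagonal ((RCLike.ofReal ∘ hP.eigenvalues : n → ℂ)) * diagonal ((RCLike.ofReal ∘ hP.eigenvalues : n → ℂ))
      = diagonal ((RCLike.ofReal ∘ hP.eigenvalues : n → ℂ)) := by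
    conv_lhs => rw [← hd]
    conv_rhs => rw [← hd]
    simp only [mul_assoc]
    rw [show U * (star U * (P * U)) = P * U from by rw [← mul_assoc, hUU, one_mul]]
    rw [show P * (P * U) = P * U from by rw [← mul_assoc, h2]]
  rw [diagonal_mul_diagonal] at key
  have h := congrArg (fun M : Matrix n n ℂ => M i i) key
  simp only [diagonal_apply_eq, Pi.mul_apply, Function.comp_apply] at h
  have h' : hP.eigenvalues i * hP.eigenvalues i = hP.eigenvalues i := by
    exact_mod_cast h
  rcases mul_eq_zero.mp (by ring_nf; linarith [h'] :
      hP.eigenvalues i * (hP.eigenvalues i - 1) = 0) with h0 | h0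
  · exact Or.inl h0
  · exact Or.inr (by linarith [sub_eq_zero.mp h0])

lemma herm_idem_trace {P : Matrix n n ℂ} (hP : P.IsHermitian) (h2 : P * P = P) :
    P.trace = (P.rank : ℂ) := by
  conv_lhs => rw [hP.spectral_theorem, Unitary.conjStarAlgAut_apply]
  rw [trace_unitary_conj hP.eigenvectorUnitary, Matrix.trace_diagonal,
    hP.rank_eq_card_non_zero_eigs, Fintype.card_subtype]
  rw [show ∑ i, ((RCLike.ofReal ∘ hP.eigenvalues : n → ℂ)) i
      = ∑ i, (if hP.eigenvalues i = 0 then (0:ℂ) else 1) from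
    Finset.sum_congr rfl fun i _ => by
      rcases herm_idem_eigenvalues hP h2 i with h | h <;> simp [h]]
  simp [Finset.sum_ite, Finset.filter_ne']

end Helpers

/-- A density operator of rank at most `r` is at trace distance at least
`2(1 − r/r₀)` from any state with flat spectrum of rank `r₀ > r`, i.e. from
`σ = Π/r₀` for a projection `Π` of rank `r₀`. -/
theorem traceNorm_low_rank_sub_flat_ge {N : ℕ} (ρ P : Matrix (Fin N) (Fin N) ℂ)
    (r r₀ : ℕ) (hρ : ρ.PosSemidef) (hρtr : ρ.trace = 1) (hρrank : ρ.rank ≤ r)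
    (hP : Pᴴ = P ∧ P * P = P) (hPrank : P.rank = r₀) (hr : r < r₀) :
    2 * (1 - (r : ℝ) / r₀) ≤ traceNorm (ρ - ((r₀ : ℂ)⁻¹ • P)) := by
  have hr₀pos : (0:ℝ) < r₀ := by exact_mod_cast lt_of_le_of_lt (Nat.zero_le r) hr
  have hr₀ne : (r₀ : ℂ) ≠ 0 := by exact_mod_cast ne_of_gt (by exact_mod_cast hr₀pos : (0:ℂ) < r₀)
  set A : Matrix (Fin N) (Fin N) ℂ := ρ - ((r₀ : ℂ)⁻¹ • P) with hAdef
  have hρh : ρ.IsHermitian := hρ.1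
  have hPh : P.IsHermitian := hP.1
  have hAh : A.IsHermitian := by
    rw [hAdef]
    apply hρh.sub
    rw [Matrix.IsHermitian, conjTranspose_smul, hPh.eq]
    congr 1
    simp
  -- the projection Q onto the range of ρ
  set ind : Fin N → ℂ := fun i => if hρh.eigenvalues i = 0 then 0 else 1 with hinddef
  set V : Matrix (Fin N) (Fin N) ℂ := (hρh.eigenvectorUnitary : Matrix (Fin N) (Fin N) ℂ) with hVdef
  set Q : Matrix (Fin N) (Fin N) ℂ := V * diagonal ind * star V with hQdef
  have hind0 : 0 ≤ ind := by
    intro i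
    by_cases h : hρh.eigenvalues i = 0 <;> simp [hinddef, h]
  have hQpsd : Q.PosSemidef := by
    simpa [hQdef, star_eq_conjTranspose] using
      (Matrix.PosSemidef.diagonal (d := ind) hind0).mul_mul_conjTranspose_same V
  have hVV : V * star V = 1 := Unitary.mul_star_self_of_mem hρh.eigenvectorUnitary.2
  have hQ1 : 1 - Q = V * diagonal (fun i => 1 - ind i) * star V := by
    have : diagonal (fun i => 1 - ind i) = 1 - diagonal ind := by
      rw [← diagonal_one, ← diagonal_sub]
    rw [this, mul_sub, mul_one, sub_mul, hVV, hQdef]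
  have hQ1psd : (1 - Q).PosSemidef := by
    rw [hQ1]
    have h0 : 0 ≤ (fun i => 1 - ind i) := by
      intro i
      by_cases h : hρh.eigenvalues i = 0 <;> simp [hinddef, h]
    simpa [star_eq_conjTranspose] using
      (Matrix.PosSemidef.diagonal h0).mul_mul_conjTranspose_same V
  have hρQ : ρ * Q = ρ := by
    conv_lhs => rw [hρh.spectral_theorem, Unitary.conjStarAlgAut_apply, hQdef, hVdef, conj_diag_mul hρh]
    conv_rhs => rw [hρh.spectral_theorem, Unitary.conjStarAlgAut_apply]
    have hfun : (RCLike.ofReal ∘ hρh.eigenvalues : Fin N → ℂ) * ind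
        = (RCLike.ofReal ∘ hρh.eigenvalues : Fin N → ℂ) := by
      funext i
      by_cases h : hρh.eigenvalues i = 0 <;> simp [hinddef, h]
    rw [hfun]
  have hQtr : Q.trace = (ρ.rank : ℂ) := by
    rw [hQdef, hVdef, trace_unitary_conj hρh.eigenvectorUnitary, Matrix.trace_diagonal,
      hρh.rank_eq_card_non_zero_eigs, Fintype.card_subtype, hinddef]
    simp [Finset.sum_ite, Finset.filter_ne']
  -- trace facts
  have hPtr : P.trace = (r₀ : ℂ) := by rw [herm_idem_trace hPh hP.2, hPrank]
  have htrA : A.trace = 0 := by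
    rw [hAdef, trace_sub, trace_smul, hρtr, hPtr, smul_eq_mul, inv_mul_cancel₀ hr₀ne, sub_self]
  have h1P : (1 - P).PosSemidef := by
    apply herm_idem_posSemidef
    · rw [conjTranspose_sub, hPh.eq, conjTranspose_one]
    · rw [mul_sub, mul_one, sub_mul, one_mul, hP.2]
      simp
  have htrPQ : ((P * Q).trace).re ≤ (r : ℝ) := by
    have h1 : 0 ≤ (((1 - P) * Q).trace).re := psd_mul_trace_re_nonneg h1P hQpsd
    have h2 : ((1 - P) * Q).trace = Q.trace - (P * Q).trace := by
      rw [sub_mul, one_mul, trace_sub]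
    rw [h2] at h1
    have h3 : ((P * Q).trace).re ≤ (Q.trace).re := by
      have := Complex.sub_re (Q.trace) ((P * Q).trace)
      rw [this] at h1; linarith
    have h4 : (Q.trace).re = (ρ.rank : ℝ) := by rw [hQtr]; simp
    rw [h4] at h3
    exact h3.trans (by exact_mod_cast hρrank)
  -- the diagonal entries of Q in the eigenbasis of A
  set U : Matrix (Fin N) (Fin N) ℂ := (hAh.eigenvectorUnitary : Matrix (Fin N) (Fin N) ℂ) with hUdef
  set c : Fin N → ℝ := fun i => ((star U * Q * U) i i).re with hcdef
  have hc0 : ∀ i, 0 ≤ c i := fun i => by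
    apply psd_diag_re_nonneg
    simpa [star_eq_conjTranspose] using hQpsd.conjTranspose_mul_mul_same U
  have hc1 : ∀ i, c i ≤ 1 := by
    intro i
    have hU1 : star U * U = 1 := Unitary.star_mul_self_of_mem hAh.eigenvectorUnitary.2
    have hpsd : (star U * (1 - Q) * U).PosSemidef := by
      simpa [star_eq_conjTranspose] using hQ1psd.conjTranspose_mul_mul_same U
    have heq : star U * (1 - Q) * U = 1 - star U * Q * U := by
      rw [mul_sub, mul_one, sub_mul, hU1]
    have := psd_diag_re_nonneg hpsd i
    rw [heq] at this
    have h2 : ((1 - star U * Q * U) i i) = 1 - (star U * Q * U) i i := by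
      simp [Matrix.sub_apply, Matrix.one_apply_eq]
    rw [h2, Complex.sub_re, Complex.one_re] at this
    simpa [hcdef] using by linarith
  -- trace of A*Q
  have htrAQ : ((A * Q).trace).re = 1 - (r₀ : ℝ)⁻¹ * ((P * Q).trace).re := by
    have h1 : A * Q = ρ * Q - (r₀ : ℂ)⁻¹ • (P * Q) := by
      rw [hAdef, sub_mul, smul_mul_assoc]
    rw [h1, trace_sub, trace_smul, hρQ, hρtr, smul_eq_mul, Complex.sub_re, Complex.one_re]
    congr 1
    rw [show ((r₀:ℂ))⁻¹ = (((r₀:ℝ)⁻¹ : ℝ) : ℂ) from by push_cast; ring]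
    exact Complex.re_ofReal_mul _ _
  -- key inequality
  have hsum1 : ((A * Q).trace).re = ∑ i, hAh.eigenvalues i * c i := trace_herm_mul_re A hAh Q
  have hsum2 : (A.trace).re = ∑ i, hAh.eigenvalues i := trace_herm_re A hAh
  have hmain : ∑ i, hAh.eigenvalues i * (2 * c i - 1) ≤ traceNorm A := by
    rw [traceNorm_herm_eq hAh]
    apply Finset.sum_le_sum
    intro i _
    calc hAh.eigenvalues i * (2 * c i - 1) ≤ |hAh.eigenvalues i * (2 * c i - 1)| := le_abs_self _
      _ = |hAh.eigenvalues i| * |2 * c i - 1| := abs_mul _ _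
      _ ≤ |hAh.eigenvalues i| * 1 := by
          apply mul_le_mul_of_nonneg_left _ (abs_nonneg _)
          rw [abs_le]
          constructor <;> [linarith [hc1 i, hc0 i]; linarith [hc1 i, hc0 i]]
      _ = |hAh.eigenvalues i| := mul_one _
  have hexpand : ∑ i, hAh.eigenvalues i * (2 * c i - 1)
      = 2 * ((A * Q).trace).re - (A.trace).re := by
    rw [hsum1, hsum2, Finset.mul_sum, ← Finset.sum_sub_distrib]
    congr 1; funext i; ring
  have htrAre : (A.trace).re = 0 := by rw [htrA]; simp
  rw [hexpand, htrAre, sub_zero, htrAQ] at hmain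
  refine le_trans ?_ hmain
  have : (r₀ : ℝ)⁻¹ * ((P * Q).trace).re ≤ (r : ℝ) / r₀ := by
    rw [div_eq_inv_mul]
    apply mul_le_mul_of_nonneg_left htrPQ (by positivity)
  linarith
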